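/- Let α be an alternating p-form on Q with 2 ≤ p ≤ q. Then Σ_{i,j,k,l=1}^q ⟨A_{e_i}e_j, A_{e_k}e_l⟩_L · ⟨(e_j∧e_i)⌟α, (e_l∧e_k)⌟α⟩ = Σ_{s=1}^r |(Σ_{i=1}^q A_{e_i}V_s ∧ e_i)⌟α|². -/

import Mathlib

open scoped BigOperators RealInnerProductSpace

variable {Q : Type*} [NormedAddCommGroup Q] [InnerProductSpace ℝ Q]

/-- Inner product of two `p`-forms with respect to an orthonormal frame `e`:
`⟨α,β⟩ = (1/p!) ∑_{i₁,…,i_p} α(e_{i₁},…,e_{i_p}) β(e_{i₁},…,e_{i_p})`. -/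
noncomputable def formInner {q p : ℕ} (e : Fin q → Q)
    (α β : AlternatingMap ℝ Q ℝ (Fin p)) : ℝ :=
  (1 / (Nat.factorial p : ℝ)) * ∑ f : Fin p → Fin q, α (e ∘ f) * β (e ∘ f)

/-- Interior product `X ⌟ α` of a vector with a `p`-form (zero when `p = 0`).
The interior product with a decomposable `2`-vector is then `(X∧Y)⌟α = X⌟(Y⌟α)`,
i.e. `((X∧Y)⌟α)(Z₁,…) = α(Y,X,Z₁,…)`. -/
noncomputable def iprod : ∀ {p : ℕ}, Q → AlternatingMap ℝ Q ℝ (Fin p) →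
    AlternatingMap ℝ Q ℝ (Fin (p - 1))
  | 0, _, _ => 0
  | _ + 1, X, α => α.curryLeft X

lemma altSum_apply {p : ℕ} {ι : Type*} (s : Finset ι) (f : ι → AlternatingMap ℝ Q ℝ (Fin p))
    (v : Fin p → Q) : (∑ x ∈ s, f x) v = ∑ x ∈ s, f x v := by
  classical
  induction s using Finset.induction_on with
  | empty => simp
  | insert _ _ h ih => simp [Finset.sum_insert h, ih]

lemma formInner_sum_left {q p : ℕ} (e : Fin q → Q) {ι : Type*} (s : Finset ι)
    (f : ι → AlternatingMap ℝ Q ℝ (Fin p)) (γ : AlternatingMap ℝ Q ℝ (Fin p)) :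
    formInner e (∑ x ∈ s, f x) γ = ∑ x ∈ s, formInner e (f x) γ := by
  unfold formInner
  simp only [altSum_apply, Finset.sum_mul, Finset.mul_sum]
  rw [Finset.sum_comm]

lemma formInner_sum_right {q p : ℕ} (e : Fin q → Q) {ι : Type*} (s : Finset ι)
    (γ : AlternatingMap ℝ Q ℝ (Fin p)) (f : ι → AlternatingMap ℝ Q ℝ (Fin p)) :
    formInner e γ (∑ x ∈ s, f x) = ∑ x ∈ s, formInner e γ (f x) := by
  unfold formInner
  simp only [altSum_apply, Finset.mul_sum]
  rw [Finset.sum_comm]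

lemma formInner_smul_smul {q p : ℕ} (e : Fin q → Q) (a b : ℝ)
    (α β : AlternatingMap ℝ Q ℝ (Fin p)) :
    formInner e (a • α) (b • β) = a * b * formInner e α β := by
  unfold formInner
  simp only [AlternatingMap.smul_apply, smul_eq_mul, Finset.mul_sum]
  ring_nf
  refine Finset.sum_congr rfl fun x _ => by ring

lemma iprod_sum_smul {n q : ℕ} (e : Fin q → Q) (c : Fin q → ℝ)
    (β : AlternatingMap ℝ Q ℝ (Fin (n + 1))) :
    iprod (∑ j : Fin q, c j • e j) β = ∑ j : Fin q, c j • iprod (e j) β := by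
  show β.curryLeft (∑ j : Fin q, c j • e j) = _
  rw [map_sum]
  exact Finset.sum_congr rfl fun j _ => by rw [map_smul]; rfl

lemma sum_comm5 {n r : ℕ} (f : Fin n → Fin n → Fin n → Fin n → Fin r → ℝ) :
    ∑ i, ∑ j, ∑ k, ∑ l, ∑ s, f i j k l s = ∑ s, ∑ i, ∑ j, ∑ k, ∑ l, f i j k l s := by
  calc ∑ i, ∑ j, ∑ k, ∑ l, ∑ s, f i j k l s
      = ∑ i, ∑ s, ∑ j, ∑ k, ∑ l, f i j k l s := by
        refine Finset.sum_congr rfl fun i _ => ?_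
        calc ∑ j, ∑ k, ∑ l, ∑ s, f i j k l s
            = ∑ j, ∑ s, ∑ k, ∑ l, f i j k l s := by
              refine Finset.sum_congr rfl fun j _ => ?_
              calc ∑ k, ∑ l, ∑ s, f i j k l s
                  = ∑ k, ∑ s, ∑ l, f i j k l s :=
                    Finset.sum_congr rfl fun k _ => Finset.sum_comm
                _ = ∑ s, ∑ k, ∑ l, f i j k l s := Finset.sum_comm
          _ = ∑ s, ∑ j, ∑ k, ∑ l, f i j k l s := Finset.sum_comm
    _ = ∑ s, ∑ i, ∑ j, ∑ k, ∑ l, f i j k l s := Finset.sum_comm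

/-- For a `p`-form `α` with `2 ≤ p ≤ q` and a skew-symmetric bilinear map `A : Q × Q → L`
(the O'Neill tensor), writing `A_{e_i}V_s = ∑_j ⟨A_{e_i}e_j, V_s⟩ e_j`,
`∑_{i,j,k,l} ⟨A_{e_i}e_j, A_{e_k}e_l⟩·⟨(e_j∧e_i)⌟α, (e_l∧e_k)⌟α⟩
  = ∑_s |(∑_i A_{e_i}V_s ∧ e_i)⌟α|²`. -/
theorem stmt3 {q r p : ℕ} (hp2 : 2 ≤ p) (hpq : p ≤ q)
    (e : OrthonormalBasis (Fin q) ℝ Q)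
    {L : Type*} [NormedAddCommGroup L] [InnerProductSpace ℝ L]
    (V : OrthonormalBasis (Fin r) ℝ L)
    (A : Q →ₗ[ℝ] Q →ₗ[ℝ] L) (hA : ∀ X Y : Q, A X Y = - A Y X)
    (α : AlternatingMap ℝ Q ℝ (Fin p)) :
    ∑ i : Fin q, ∑ j : Fin q, ∑ k : Fin q, ∑ l : Fin q,
        ⟪A (e i) (e j), A (e k) (e l)⟫ *
          formInner ⇑e (iprod (e j) (iprod (e i) α)) (iprod (e l) (iprod (e k) α))
      = ∑ s : Fin r,
          formInner ⇑e
            (∑ i : Fin q, iprod (∑ j : Fin q, ⟪A (e i) (e j), V s⟫ • e j) (iprod (e i) α))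
            (∑ i : Fin q, iprod (∑ j : Fin q, ⟪A (e i) (e j), V s⟫ • e j) (iprod (e i) α)) := by
  obtain ⟨m, rfl⟩ : ∃ m, p = m + 2 := ⟨p - 2, by omega⟩
  set F : Fin q → Fin q → Fin q → Fin q → ℝ := fun i j k l =>
    formInner ⇑e (iprod (e j) (iprod (e i) α)) (iprod (e l) (iprod (e k) α)) with hF
  set c : Fin r → Fin q → Fin q → ℝ := fun s i j => ⟪A (e i) (e j), V s⟫ with hc
  have key : ∀ (s : Fin r) (i : Fin q),
      iprod (∑ j : Fin q, ⟪A (e i) (e j), V s⟫ • e j) (iprod (e i) α)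
        = ∑ j : Fin q, c s i j • iprod (e j) (iprod (e i) α) := fun s i =>
    iprod_sum_smul (n := m) ⇑e (fun j => c s i j) (iprod (e i) α)
  have hrhs : ∀ s : Fin r,
      formInner ⇑e
        (∑ i : Fin q, iprod (∑ j : Fin q, ⟪A (e i) (e j), V s⟫ • e j) (iprod (e i) α))
        (∑ i : Fin q, iprod (∑ j : Fin q, ⟪A (e i) (e j), V s⟫ • e j) (iprod (e i) α))
      = ∑ i : Fin q, ∑ j : Fin q, ∑ k : Fin q, ∑ l : Fin q,
          c s i j * c s k l * F i j k l := by
    intro s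
    set X : Fin q → Fin q → AlternatingMap ℝ Q ℝ (Fin m) := fun i j =>
      c s i j • iprod (e j) (iprod (e i) α) with hX
    have harg : (∑ i : Fin q, iprod (∑ j : Fin q, ⟪A (e i) (e j), V s⟫ • e j) (iprod (e i) α))
        = ∑ i : Fin q, ∑ j : Fin q, X i j :=
      Finset.sum_congr rfl fun i _ => key s i
    rw [harg]
    calc formInner ⇑e (∑ i : Fin q, ∑ j : Fin q, X i j) (∑ i : Fin q, ∑ j : Fin q, X i j)
        = ∑ i : Fin q, ∑ j : Fin q,
            formInner ⇑e (X i j) (∑ k : Fin q, ∑ l : Fin q, X k l) := by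
          rw [formInner_sum_left]
          exact Finset.sum_congr rfl fun i _ => formInner_sum_left _ _ _ _
      _ = ∑ i : Fin q, ∑ j : Fin q, ∑ k : Fin q, ∑ l : Fin q,
            formInner ⇑e (X i j) (X k l) := by
          refine Finset.sum_congr rfl fun i _ => Finset.sum_congr rfl fun j _ => ?_
          rw [formInner_sum_right]
          exact Finset.sum_congr rfl fun k _ => formInner_sum_right _ _ _ _
      _ = _ := by
          refine Finset.sum_congr rfl fun i _ => Finset.sum_congr rfl fun j _ =>
            Finset.sum_congr rfl fun k _ => Finset.sum_congr rfl fun l _ => ?_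
          rw [hX]
          exact formInner_smul_smul _ _ _ _ _
  have hinner : ∀ i j k l : Fin q,
      ⟪A (e i) (e j), A (e k) (e l)⟫ = ∑ s : Fin r, c s i j * c s k l := by
    intro i j k l
    rw [← OrthonormalBasis.sum_inner_mul_inner V]
    refine Finset.sum_congr rfl fun s _ => ?_
    rw [real_inner_comm (A (e k) (e l)) (V s)]
  calc ∑ i : Fin q, ∑ j : Fin q, ∑ k : Fin q, ∑ l : Fin q,
        ⟪A (e i) (e j), A (e k) (e l)⟫ * F i j k l
      = ∑ i : Fin q, ∑ j : Fin q, ∑ k : Fin q, ∑ l : Fin q, ∑ s : Fin r,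
          c s i j * c s k l * F i j k l := by
        simp only [hinner, Finset.sum_mul]
    _ = ∑ s : Fin r, ∑ i : Fin q, ∑ j : Fin q, ∑ k : Fin q, ∑ l : Fin q,
          c s i j * c s k l * F i j k l := sum_comm5 _
    _ = _ := by
        refine Finset.sum_congr rfl fun s _ => ?_
        rw [hrhs s]
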